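/- Fix θ ∈ [0, π/2), ε ∈ (0,1], capacity C > 0 and L = εC/(n(tan θ + 1)). Suppose nonnegative reals P₊, P₋, P_I and rounded values P̂₊, P̂₋, P̂_I satisfy max{P̂₊ − nL, 0} ≤ P₊ ≤ P̂₊, max{P̂₋ − nL, 0} ≤ P₋ ≤ P̂₋, max{P̂_I − nL, 0} ≤ P_I ≤ P̂_I, together with P̂₊ ≤ C(1 + tan θ) + L, P̂₋ ≤ C tan θ + L, and (P̂₊ − P̂₋)² + P̂_I² ≤ (1 + 2ε)² C². Then (P₊ − P₋)² + P_I² ≤ (1 + 4ε)² C². -/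
import Mathlib


theorem rounded_violation_bound (n : ℕ) (hn : 0 < n) (θ ε C : ℝ)
    (hθ0 : 0 ≤ θ) (hθ : θ < Real.pi / 2) (hε : 0 < ε) (hε1 : ε ≤ 1) (hC : 0 < C)
    (L : ℝ) (hL : L = ε * C / (n * (Real.tan θ + 1)))
    (Pp Pm Pi Qp Qm Qi : ℝ)
    (hPp0 : 0 ≤ Pp) (hPm0 : 0 ≤ Pm) (hPi0 : 0 ≤ Pi)
    (hQp : max (Qp - n * L) 0 ≤ Pp ∧ Pp ≤ Qp)
    (hQm : max (Qm - n * L) 0 ≤ Pm ∧ Pm ≤ Qm)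
    (hQi : max (Qi - n * L) 0 ≤ Pi ∧ Pi ≤ Qi)
    (hQpub : Qp ≤ C * (1 + Real.tan θ) + L) (hQmub : Qm ≤ C * Real.tan θ + L)
    (hmag : (Qp - Qm) ^ 2 + Qi ^ 2 ≤ (1 + 2 * ε) ^ 2 * C ^ 2) :
    (Pp - Pm) ^ 2 + Pi ^ 2 ≤ (1 + 4 * ε) ^ 2 * C ^ 2 := by
  have ht : 0 ≤ Real.tan θ := by
    rw [Real.tan_eq_sin_div_cos]
    apply div_nonneg
    · exact Real.sin_nonneg_of_nonneg_of_le_pi hθ0 (by linarith [Real.pi_pos])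
    · exact (Real.cos_pos_of_mem_Ioo ⟨by linarith [Real.pi_pos], hθ⟩).le
  have hn' : (0:ℝ) < n := by exact_mod_cast hn
  have hnL : (n:ℝ) * L ≤ ε * C := by
    rw [hL]
    rw [mul_div_assoc']
    rw [div_le_iff₀ (by positivity)]
    nlinarith [mul_nonneg (mul_nonneg (mul_nonneg hε.le hC.le) hn'.le) ht]
  have hnL0 : 0 ≤ (n:ℝ) * L := by
    rw [hL]; positivity
  have hPpl : Qp - n * L ≤ Pp := le_trans (le_max_left _ _) hQp.1
  have hPml : Qm - n * L ≤ Pm := le_trans (le_max_left _ _) hQm.1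
  have habsQ : |Qp - Qm| ≤ (1 + 2 * ε) * C := by
    have h2 : (Qp - Qm) ^ 2 ≤ ((1 + 2 * ε) * C) ^ 2 := by nlinarith [sq_nonneg Qi]
    have := abs_le_of_sq_le_sq' h2 (by positivity)
    exact abs_le.mpr this
  have habsP : |Pp - Pm| ≤ |Qp - Qm| + n * L := by
    have h1 : Pp - Pm ≤ (Qp - Qm) + n * L := by
      have := hQp.2; linarith
    have h2 : (Qp - Qm) - n * L ≤ Pp - Pm := by
      have := hQm.2; linarith
    rw [abs_le]
    constructor
    · have := neg_abs_le (Qp - Qm); linarith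
    · have := le_abs_self (Qp - Qm); linarith
  have hPsq : (Pp - Pm) ^ 2 ≤ (|Qp - Qm| + n * L) ^ 2 := by
    rw [← sq_abs (Pp - Pm)]
    exact pow_le_pow_left₀ (abs_nonneg _) habsP 2
  have hPisq : Pi ^ 2 ≤ Qi ^ 2 := pow_le_pow_left₀ hPi0 hQi.2 2
  have hQabs0 : 0 ≤ |Qp - Qm| := abs_nonneg _
  have hsa : |Qp - Qm| ^ 2 = (Qp - Qm) ^ 2 := sq_abs _
  have key : (|Qp - Qm| + n * L) ^ 2 ≤ (Qp - Qm) ^ 2 + 2 * ((1 + 2 * ε) * C) * (ε * C) + (ε * C) ^ 2 := by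
    nlinarith [mul_le_mul habsQ hnL hnL0 (by positivity : (0:ℝ) ≤ (1 + 2 * ε) * C),
      pow_le_pow_left₀ hnL0 hnL 2]
  have hfin : (1 + 3 * ε) ^ 2 * C ^ 2 ≤ (1 + 4 * ε) ^ 2 * C ^ 2 := by
    have h1 : 0 ≤ (2 * ε + 7 * ε ^ 2) * C ^ 2 := by positivity
    have heq : (1 + 4 * ε) ^ 2 * C ^ 2 = (1 + 3 * ε) ^ 2 * C ^ 2 + (2 * ε + 7 * ε ^ 2) * C ^ 2 := by ring
    linarith
  calc (Pp - Pm) ^ 2 + Pi ^ 2 ≤ (|Qp - Qm| + n * L) ^ 2 + Qi ^ 2 := by linarith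
  _ ≤ (Qp - Qm) ^ 2 + Qi ^ 2 + 2 * ((1 + 2 * ε) * C) * (ε * C) + (ε * C) ^ 2 := by linarith
  _ ≤ (1 + 2 * ε) ^ 2 * C ^ 2 + 2 * ((1 + 2 * ε) * C) * (ε * C) + (ε * C) ^ 2 := by linarith
  _ = (1 + 3 * ε) ^ 2 * C ^ 2 := by ring
  _ ≤ (1 + 4 * ε) ^ 2 * C ^ 2 := hfin
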